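/- For the DG free algebra B(s, 1/s) with s ∈ k^×, s ≠ −1 (defined by the symmetric crisscross pair N¹ = N² = [[s,1],[1,1/s]]), the matrix A = [[s, 1/s + 2],[s+1, (s+1)/s]] is invertible and satisfies a_{11}N¹ + a_{12}N² = AᵀM¹A and a_{21}N¹ + a_{22}N² = AᵀM²A, where M¹ = M² = [[0,0],[0,1]]; hence B(s,1/s) ≅ B₈. -/

import Mathlib

open Matrix

/-- The degree-`i` homogeneous component of the free algebra with all
generators in degree `1`: the span of the words of length `i`. -/
noncomputable def deg (k : Type*) [CommRing k] (n : ℕ) (i : ℕ) :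
    Submodule k (FreeAlgebra k (Fin n)) :=
  Submodule.span k
    {w | ∃ f : Fin i → Fin n, w = (List.ofFn fun j => FreeAlgebra.ι k (f j)).prod}

namespace Stmt14Aux
variable {k : Type*} [CommRing k] {n : ℕ}

lemma word_mem {i : ℕ} (f : Fin i → Fin n) :
    (List.ofFn fun j => FreeAlgebra.ι k (f j)).prod ∈ deg k n i :=
  Submodule.subset_span ⟨f, rfl⟩

lemma one_mem : (1 : FreeAlgebra k (Fin n)) ∈ deg k n 0 := by
  simpa using word_mem (k := k) (Fin.elim0 : Fin 0 → Fin n)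

lemma iota_mem (j : Fin n) : FreeAlgebra.ι k j ∈ deg k n 1 := by
  simpa using word_mem (k := k) (fun _ : Fin 1 => j)

lemma word_concat {p q : ℕ} (f : Fin p → Fin n) (g : Fin q → Fin n) :
    (List.ofFn fun j => FreeAlgebra.ι k (f j)).prod *
      (List.ofFn fun j => FreeAlgebra.ι k (g j)).prod =
    (List.ofFn fun j => FreeAlgebra.ι k (Fin.append f g j)).prod := by
  have : (List.ofFn fun j => FreeAlgebra.ι k (Fin.append f g j)) =
      List.ofFn (Fin.append (fun j => FreeAlgebra.ι k (f j)) (fun j => FreeAlgebra.ι k (g j))) := by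
    congr 1
    funext j
    refine Fin.addCases (fun i => ?_) (fun i => ?_) j <;>
      simp [Fin.append_left, Fin.append_right]
  rw [this, List.ofFn_fin_append, List.prod_append]

lemma deg_mul {p q : ℕ} {a b : FreeAlgebra k (Fin n)} (ha : a ∈ deg k n p)
    (hb : b ∈ deg k n q) : a * b ∈ deg k n (p + q) := by
  induction ha using Submodule.span_induction with
  | mem x hx =>
    obtain ⟨f, rfl⟩ := hx
    induction hb using Submodule.span_induction with
    | mem y hy =>
      obtain ⟨g, rfl⟩ := hy
      rw [word_concat]
      exact word_mem _
    | zero => simp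
    | add y z _ _ hy hz => rw [mul_add]; exact add_mem hy hz
    | smul c y _ hy => rw [mul_smul_comm]; exact Submodule.smul_mem _ _ hy
  | zero => simp
  | add x y _ _ hx hy => rw [add_mul]; exact add_mem hx hy
  | smul c x _ hx => rw [smul_mul_assoc]; exact Submodule.smul_mem _ _ hx

lemma mem_span_words (a : FreeAlgebra k (Fin n)) :
    a ∈ Submodule.span k
      {w : FreeAlgebra k (Fin n) | ∃ i : ℕ, ∃ f : Fin i → Fin n,
        w = (List.ofFn fun j => FreeAlgebra.ι k (f j)).prod} := by
  set W : Set (FreeAlgebra k (Fin n)) :=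
    {w | ∃ i : ℕ, ∃ f : Fin i → Fin n, w = (List.ofFn fun j => FreeAlgebra.ι k (f j)).prod}
  have hWmul : ∀ x ∈ Submodule.span k W, ∀ y ∈ Submodule.span k W,
      x * y ∈ Submodule.span k W := by
    intro x hx y hy
    induction hx using Submodule.span_induction with
    | mem x hx =>
      obtain ⟨p, f, rfl⟩ := hx
      induction hy using Submodule.span_induction with
      | mem y hy =>
        obtain ⟨q, g, rfl⟩ := hy
        rw [word_concat]
        exact Submodule.subset_span ⟨p + q, _, rfl⟩
      | zero => simp
      | add y z _ _ h1 h2 => rw [mul_add]; exact add_mem h1 h2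
      | smul c y _ h1 => rw [mul_smul_comm]; exact Submodule.smul_mem _ _ h1
    | zero => simp
    | add x y _ _ h1 h2 => rw [add_mul]; exact add_mem h1 h2
    | smul c x _ h1 => rw [smul_mul_assoc]; exact Submodule.smul_mem _ _ h1
  have hone : (1 : FreeAlgebra k (Fin n)) ∈ Submodule.span k W :=
    Submodule.subset_span ⟨0, Fin.elim0, by simp⟩
  induction a using FreeAlgebra.induction with
  | grade0 r =>
    rw [Algebra.algebraMap_eq_smul_one]
    exact Submodule.smul_mem _ _ hone
  | grade1 x =>
    exact Submodule.subset_span ⟨1, fun _ => x, by simp⟩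
  | mul a b ha hb => exact hWmul a ha b hb
  | add a b ha hb => exact add_mem ha hb

end Stmt14Aux

set_option maxHeartbeats 1000000 in
/-- for `s ≠ 0`, `s ≠ −1`, the matrix
`A = [[s, 1/s + 2],[s+1, (s+1)/s]]` is invertible and satisfies
`a_{i1}N¹ + a_{i2}N² = AᵀMⁱA` (`i = 1,2`) for `M¹ = M² = [[0,0],[0,1]]`
(defining `B₈`) and `N¹ = N² = [[s,1],[1,1/s]]` (defining `B(s,1/s)`);
hence `B(s,1/s) ≅ B₈` as DG algebras. -/
theorem stmt14 {k : Type*} [Field k] [CharZero k] (s : k) (hs : s ≠ 0) (hs1 : s ≠ -1)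
    (dM dN : FreeAlgebra k (Fin 2) →ₗ[k] FreeAlgebra k (Fin 2))
    (hLM : ∀ (p : ℕ) (a b : FreeAlgebra k (Fin 2)), a ∈ deg k 2 p →
      dM (a * b) = dM a * b + ((-1 : k) ^ p) • (a * dM b))
    (hLN : ∀ (p : ℕ) (a b : FreeAlgebra k (Fin 2)), a ∈ deg k 2 p →
      dN (a * b) = dN a * b + ((-1 : k) ^ p) • (a * dN b))
    (hM1 : dM (FreeAlgebra.ι k 0) = FreeAlgebra.ι k 1 * FreeAlgebra.ι k 1)
    (hM2 : dM (FreeAlgebra.ι k 1) = FreeAlgebra.ι k 1 * FreeAlgebra.ι k 1)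
    (hN1 : dN (FreeAlgebra.ι k 0) =
      s • (FreeAlgebra.ι k 0 * FreeAlgebra.ι k 0)
        + FreeAlgebra.ι k 0 * FreeAlgebra.ι k 1
        + FreeAlgebra.ι k 1 * FreeAlgebra.ι k 0
        + s⁻¹ • (FreeAlgebra.ι k 1 * FreeAlgebra.ι k 1))
    (hN2 : dN (FreeAlgebra.ι k 1) =
      s • (FreeAlgebra.ι k 0 * FreeAlgebra.ι k 0)
        + FreeAlgebra.ι k 0 * FreeAlgebra.ι k 1
        + FreeAlgebra.ι k 1 * FreeAlgebra.ι k 0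
        + s⁻¹ • (FreeAlgebra.ι k 1 * FreeAlgebra.ι k 1)) :
    IsUnit (!![s, s⁻¹ + 2; s + 1, (s + 1) / s] : Matrix (Fin 2) (Fin 2) k).det ∧
    (∀ i : Fin 2,
      (!![s, s⁻¹ + 2; s + 1, (s + 1) / s] : Matrix (Fin 2) (Fin 2) k) i 0 •
          (!![s, 1; 1, s⁻¹] : Matrix (Fin 2) (Fin 2) k)
        + !![s, s⁻¹ + 2; s + 1, (s + 1) / s] i 1 • !![s, 1; 1, s⁻¹] =
      (!![s, s⁻¹ + 2; s + 1, (s + 1) / s] : Matrix (Fin 2) (Fin 2) k)ᵀ *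
        (![!![(0 : k), 0; 0, 1], !![(0 : k), 0; 0, 1]] i) *
        !![s, s⁻¹ + 2; s + 1, (s + 1) / s]) ∧
    (∃ f : FreeAlgebra k (Fin 2) ≃ₐ[k] FreeAlgebra k (Fin 2),
      (∀ (i : ℕ), ∀ a ∈ deg k 2 i, f a ∈ deg k 2 i) ∧
      (∀ a, f (dM a) = dN (f a))) := by
  have hs1' : s + 1 ≠ 0 := fun h => hs1 (by linear_combination h)
  refine ⟨?_, ?_, ?_⟩
  · -- determinant
    rw [Matrix.det_fin_two_of, isUnit_iff_ne_zero]
    have h2 : s * ((s + 1) / s) - (s⁻¹ + 2) * (s + 1) = -((s+1)^2)/s := by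
      field_simp
      ring
    rw [h2]
    intro h
    rcases div_eq_zero_iff.mp h with h3 | h3
    · exact hs1' (pow_eq_zero_iff (two_ne_zero) |>.mp (neg_eq_zero.mp h3))
    · exact hs h3
  · -- matrix identity
    intro i
    have hT : (!![s, s⁻¹ + 2; s + 1, (s + 1) / s] : Matrix (Fin 2) (Fin 2) k)ᵀ
        = !![s, s + 1; s⁻¹ + 2, (s + 1) / s] := by
      ext r c
      fin_cases r <;> fin_cases c <;> rfl
    rw [hT]
    fin_cases i <;> ext r c <;> fin_cases r <;> fin_cases c <;>
      simp only [Matrix.mul_apply, Fin.sum_univ_two, Matrix.add_apply, Matrix.smul_apply,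
        Matrix.cons_val_zero, Matrix.cons_val_one, Matrix.head_cons, Matrix.head_fin_const,
        Matrix.cons_val_fin_one, Matrix.cons_val', Matrix.empty_val', smul_eq_mul, Matrix.of_apply,
        Fin.mk_zero, Fin.mk_one, Fin.isValue] <;>
      field_simp <;> ring
  · -- the DG isomorphism
    set x0 := FreeAlgebra.ι k (0 : Fin 2) with hx0
    set x1 := FreeAlgebra.ι k (1 : Fin 2) with hx1
    set u : Fin 2 → FreeAlgebra k (Fin 2) :=
      ![s • x0 + (s⁻¹ + 2) • x1, (s + 1) • x0 + ((s + 1) / s) • x1] with hu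
    set v : Fin 2 → FreeAlgebra k (Fin 2) :=
      ![(-(s + 1)⁻¹) • x0 + ((1 + 2 * s) / (s + 1) ^ 2) • x1,
        (s / (s + 1)) • x0 + (-(s ^ 2 / (s + 1) ^ 2)) • x1] with hv
    set φ : FreeAlgebra k (Fin 2) →ₐ[k] FreeAlgebra k (Fin 2) := FreeAlgebra.lift k u with hφ
    set ψ : FreeAlgebra k (Fin 2) →ₐ[k] FreeAlgebra k (Fin 2) := FreeAlgebra.lift k v with hψ
    have hφι : ∀ j, φ (FreeAlgebra.ι k j) = u j := fun j => FreeAlgebra.lift_ι_apply _ _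
    have hψι : ∀ j, ψ (FreeAlgebra.ι k j) = v j := fun j => FreeAlgebra.lift_ι_apply _ _
    have hφψ : φ.comp ψ = AlgHom.id k (FreeAlgebra k (Fin 2)) := by
      apply FreeAlgebra.hom_ext
      funext j
      fin_cases j <;>
        · simp only [Function.comp_apply, AlgHom.coe_comp, AlgHom.coe_id, id_eq,
            Fin.isValue]
          rw [hψι]
          simp only [hv, Matrix.cons_val_zero, Matrix.cons_val_one, Matrix.head_cons, Fin.mk_zero, Fin.mk_one, Fin.isValue]
          rw [_root_.map_add, _root_.map_smul, _root_.map_smul, hx0, hx1, hφι, hφι]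
          simp only [hu, Matrix.cons_val_zero, Matrix.cons_val_one, Matrix.head_cons, Fin.mk_zero, Fin.mk_one, Fin.isValue]
          match_scalars <;> field_simp <;> ring
    have hψφ : ψ.comp φ = AlgHom.id k (FreeAlgebra k (Fin 2)) := by
      apply FreeAlgebra.hom_ext
      funext j
      fin_cases j <;>
        · simp only [Function.comp_apply, AlgHom.coe_comp, AlgHom.coe_id, id_eq,
            Fin.isValue]
          rw [hφι]
          simp only [hu, Matrix.cons_val_zero, Matrix.cons_val_one, Matrix.head_cons, Fin.mk_zero, Fin.mk_one, Fin.isValue]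
          rw [_root_.map_add, _root_.map_smul, _root_.map_smul, hx0, hx1, hψι, hψι]
          simp only [hv, Matrix.cons_val_zero, Matrix.cons_val_one, Matrix.head_cons, Fin.mk_zero, Fin.mk_one, Fin.isValue]
          match_scalars <;> field_simp <;> ring
    have hu1 : ∀ j : Fin 2, φ (FreeAlgebra.ι k j) ∈ deg k 2 1 := by
      intro j
      rw [hφι]
      fin_cases j <;>
        · simp only [hu, Matrix.cons_val_zero, Matrix.cons_val_one, Matrix.head_cons, Fin.mk_zero, Fin.mk_one, Fin.isValue]
          exact add_mem (Submodule.smul_mem _ _ (Stmt14Aux.iota_mem _))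
            (Submodule.smul_mem _ _ (Stmt14Aux.iota_mem _))
    -- dM 1 = 0, dN 1 = 0
    have hdM1 : dM (1 : FreeAlgebra k (Fin 2)) = 0 := by
      have h := hLM 0 1 1 Stmt14Aux.one_mem
      simp only [one_mul, mul_one, pow_zero, one_smul] at h
      exact (left_eq_add.mp h)
    have hdN1 : dN (1 : FreeAlgebra k (Fin 2)) = 0 := by
      have h := hLN 0 1 1 Stmt14Aux.one_mem
      simp only [one_mul, mul_one, pow_zero, one_smul] at h
      exact (left_eq_add.mp h)
    have hu0e : u 0 = s • x0 + (s⁻¹ + 2) • x1 := by rw [hu]; rfl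
    have hu1e : u 1 = (s + 1) • x0 + ((s + 1) / s) • x1 := by rw [hu]; rfl
    have hφx0 : φ x0 = u 0 := by rw [hx0, hφι]
    have hφx1 : φ x1 = u 1 := by rw [hx1, hφι]
    -- generators commute
    have hgen0 : φ (dM x0) = dN (φ x0) := by
      rw [hM1, _root_.map_mul, hφx1, hφx0, hu0e, hu1e, _root_.map_add, _root_.map_smul, _root_.map_smul,
        hN1, hN2]
      simp only [add_mul, mul_add, smul_mul_assoc, mul_smul_comm, smul_smul, smul_add]
      match_scalars <;> field_simp <;> ring
    have hgen1 : φ (dM x1) = dN (φ x1) := by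
      rw [hM2, _root_.map_mul, hφx1, hu1e, _root_.map_add, _root_.map_smul, _root_.map_smul, hN1, hN2]
      simp only [add_mul, mul_add, smul_mul_assoc, mul_smul_comm, smul_smul, smul_add]
      match_scalars <;> field_simp <;> ring
    have hgen : ∀ j : Fin 2, φ (dM (FreeAlgebra.ι k j)) = dN (φ (FreeAlgebra.ι k j)) := by
      intro j
      fin_cases j
      · exact hgen0
      · exact hgen1
    have hword : ∀ i : ℕ, ∀ g : Fin i → Fin 2,
        φ (dM ((List.ofFn fun j => FreeAlgebra.ι k (g j)).prod)) =
          dN (φ ((List.ofFn fun j => FreeAlgebra.ι k (g j)).prod)) := by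
      intro i
      induction i with
      | zero =>
        intro g
        simp only [List.ofFn_zero, List.prod_nil, hdM1, hdN1, _root_.map_zero, _root_.map_one]
      | succ m ih =>
        intro g
        have hsplit : (List.ofFn fun j => FreeAlgebra.ι k (g j)).prod =
            FreeAlgebra.ι k (g 0) *
              (List.ofFn fun j : Fin m => FreeAlgebra.ι k (g j.succ)).prod := by
          rw [List.ofFn_succ, List.prod_cons]
        rw [hsplit, hLM 1 _ _ (Stmt14Aux.iota_mem _), _root_.map_add, _root_.map_smul, _root_.map_mul,
          _root_.map_mul, hgen (g 0), ih (fun j => g j.succ), _root_.map_mul,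
          hLN 1 _ _ (hu1 (g 0))]
    have hcomm : ∀ a, φ (dM a) = dN (φ a) := by
      intro a
      have ha := Stmt14Aux.mem_span_words (k := k) a
      induction ha using Submodule.span_induction with
      | mem x hx => obtain ⟨i, g, rfl⟩ := hx; exact hword i g
      | zero => simp
      | add x y _ _ h1 h2 => rw [_root_.map_add, _root_.map_add, _root_.map_add, _root_.map_add, h1, h2]
      | smul c x _ h1 =>
        rw [_root_.map_smul, _root_.map_smul, _root_.map_smul, _root_.map_smul, h1]
    have hwdeg : ∀ i : ℕ, ∀ g : Fin i → Fin 2,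
        φ ((List.ofFn fun j => FreeAlgebra.ι k (g j)).prod) ∈ deg k 2 i := by
      intro i
      induction i with
      | zero =>
        intro g
        simp only [List.ofFn_zero, List.prod_nil, _root_.map_one]
        exact Stmt14Aux.one_mem
      | succ m ih =>
        intro g
        have hsplit : (List.ofFn fun j => FreeAlgebra.ι k (g j)).prod =
            FreeAlgebra.ι k (g 0) *
              (List.ofFn fun j : Fin m => FreeAlgebra.ι k (g j.succ)).prod := by
          rw [List.ofFn_succ, List.prod_cons]
        rw [hsplit, _root_.map_mul]
        have h2 := Stmt14Aux.deg_mul (hu1 (g 0)) (ih fun j => g j.succ)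
        rwa [Nat.add_comm 1 m] at h2
    have hdeg : ∀ i : ℕ, ∀ a ∈ deg k 2 i, φ a ∈ deg k 2 i := by
      intro i a ha
      induction ha using Submodule.span_induction with
      | mem x hx => obtain ⟨g, rfl⟩ := hx; exact hwdeg i g
      | zero => simp
      | add x y _ _ h1 h2 => rw [_root_.map_add]; exact add_mem h1 h2
      | smul c x _ h1 => rw [_root_.map_smul]; exact Submodule.smul_mem _ _ h1
    exact ⟨AlgEquiv.ofAlgHom φ ψ hφψ hψφ, hdeg, hcomm⟩
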